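/- For every ε > 0 and every paravector s ∈ ℝ^{d+1}, there exists ε_s > 0 such that [s] + U_{ε_s}(0) ⊆ { q ∈ ℝ^{d+1} : |q² - 2 s_0 q + |s|²| < ε² } ⊆ [s] + U_ε(0), where [s] = { s_0 + J|Im(s)| : J ∈ 𝕊 } is the (d-1)-sphere of s and U_r(0) is the open ball of radius r. -/

import Mathlib

noncomputable section

/-- Paravectors in ℝ^{d+1} are modelled as pairs `(q₀, qv)` of real part and
imaginary part; the Euclidean distance between paravectors. -/
def pDist {d : ℕ} (p q : ℝ × (Fin d → ℝ)) : ℝ :=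
  Real.sqrt ((p.1 - q.1) ^ 2 + ∑ i, (p.2 i - q.2 i) ^ 2)

/-- The modulus `|q² - 2s₀q + |s|²|` of the paravector `q² - 2s₀q + |s|²`
(which has real part `q₀² - |qv|² - 2s₀q₀ + |s|²` and imaginary part
`2(q₀ - s₀)qv`). -/
def qPolyNorm {d : ℕ} (s q : ℝ × (Fin d → ℝ)) : ℝ :=
  Real.sqrt ((q.1 ^ 2 - ∑ i, q.2 i ^ 2 - 2 * s.1 * q.1
      + (s.1 ^ 2 + ∑ i, s.2 i ^ 2)) ^ 2
    + ∑ i, (2 * (q.1 - s.1) * q.2 i) ^ 2)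

/-- The `(d-1)`-sphere `[s] = {s₀ + J|Im s| : J ∈ 𝕊}` of a paravector `s`. -/
def pSphere {d : ℕ} (s : ℝ × (Fin d → ℝ)) : Set (ℝ × (Fin d → ℝ)) :=
  {t | t.1 = s.1 ∧ ∑ i, t.2 i ^ 2 = ∑ i, s.2 i ^ 2}

namespace SphereAux

variable {d : ℕ}

lemma sum_sq_nonneg (f : Fin d → ℝ) : 0 ≤ ∑ i, f i ^ 2 :=
  Finset.sum_nonneg fun _ _ => sq_nonneg _

/-- Factorization of the norm: `|q² - 2s₀q + |s|²| = |q - t| |q - t̄|`. -/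
lemma qPolyNorm_eq (s q : ℝ × (Fin d → ℝ)) :
    qPolyNorm s q =
      Real.sqrt ((q.1 - s.1) ^ 2 +
          (Real.sqrt (∑ i, q.2 i ^ 2) - Real.sqrt (∑ i, s.2 i ^ 2)) ^ 2) *
      Real.sqrt ((q.1 - s.1) ^ 2 +
          (Real.sqrt (∑ i, q.2 i ^ 2) + Real.sqrt (∑ i, s.2 i ^ 2)) ^ 2) := by
  have hY0 : 0 ≤ ∑ i, q.2 i ^ 2 := sum_sq_nonneg _
  have hA0 : 0 ≤ ∑ i, s.2 i ^ 2 := sum_sq_nonneg _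
  rw [qPolyNorm, ← Real.sqrt_mul (by positivity)]
  congr 1
  obtain ⟨y, hy⟩ : ∃ y, Real.sqrt (∑ i, q.2 i ^ 2) = y := ⟨_, rfl⟩
  obtain ⟨a, ha⟩ : ∃ a, Real.sqrt (∑ i, s.2 i ^ 2) = a := ⟨_, rfl⟩
  have hy2 : (∑ i, q.2 i ^ 2) = y ^ 2 := by rw [← hy, Real.sq_sqrt hY0]
  have ha2 : (∑ i, s.2 i ^ 2) = a ^ 2 := by rw [← ha, Real.sq_sqrt hA0]
  have hsum : ∑ i, (2 * (q.1 - s.1) * q.2 i) ^ 2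
      = 4 * (q.1 - s.1) ^ 2 * ∑ i, q.2 i ^ 2 := by
    rw [Finset.mul_sum]
    exact Finset.sum_congr rfl fun i _ => by ring
  rw [hy, ha, hsum, hy2, ha2]
  ring

/-- The distance from `q` to any point of the sphere is at least
`√((q₀-s₀)² + (|qv| - |sv|)²)`. -/
lemma pDist_lower (s q t : ℝ × (Fin d → ℝ)) (ht : t ∈ pSphere s) :
    Real.sqrt ((q.1 - s.1) ^ 2 +
        (Real.sqrt (∑ i, q.2 i ^ 2) - Real.sqrt (∑ i, s.2 i ^ 2)) ^ 2)
      ≤ pDist q t := by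
  obtain ⟨ht1, ht2⟩ := ht
  rw [pDist, ht1]
  apply Real.sqrt_le_sqrt
  have hY0 : 0 ≤ ∑ i, q.2 i ^ 2 := sum_sq_nonneg _
  have hA0 : 0 ≤ ∑ i, s.2 i ^ 2 := sum_sq_nonneg _
  have hCS : (∑ i, q.2 i * t.2 i) ^ 2
      ≤ (∑ i, q.2 i ^ 2) * ∑ i, t.2 i ^ 2 :=
    Finset.sum_mul_sq_le_sq_mul_sq Finset.univ _ _
  rw [ht2] at hCS
  have hexp : ∑ i, (q.2 i - t.2 i) ^ 2
      = (∑ i, q.2 i ^ 2) - 2 * (∑ i, q.2 i * t.2 i) + ∑ i, s.2 i ^ 2 := by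
    rw [← ht2, Finset.mul_sum, ← Finset.sum_sub_distrib, ← Finset.sum_add_distrib]
    exact Finset.sum_congr rfl fun i _ => by ring
  rw [hexp]
  have h1 := Real.sq_sqrt hY0
  have h2 := Real.sq_sqrt hA0
  have h3 := Real.sqrt_nonneg (∑ i, q.2 i ^ 2)
  have h4 := Real.sqrt_nonneg (∑ i, s.2 i ^ 2)
  nlinarith [sq_nonneg (Real.sqrt (∑ i, q.2 i ^ 2) * Real.sqrt (∑ i, s.2 i ^ 2)
      - ∑ i, q.2 i * t.2 i),
    mul_nonneg h3 h4]

/-- There is a point of the sphere realizing the distance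
`√((q₀-s₀)² + (|qv| - |sv|)²)`. -/
lemma exists_near (s q : ℝ × (Fin d → ℝ)) :
    ∃ t ∈ pSphere s, pDist q t =
      Real.sqrt ((q.1 - s.1) ^ 2 +
        (Real.sqrt (∑ i, q.2 i ^ 2) - Real.sqrt (∑ i, s.2 i ^ 2)) ^ 2) := by
  have hY0 : 0 ≤ ∑ i, q.2 i ^ 2 := sum_sq_nonneg _
  have hA0 : 0 ≤ ∑ i, s.2 i ^ 2 := sum_sq_nonneg _
  by_cases hY : (∑ i, q.2 i ^ 2) = 0
  · have hq0 : ∀ i, q.2 i = 0 := by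
      intro i
      have := (Finset.sum_eq_zero_iff_of_nonneg
        (fun i _ => sq_nonneg (q.2 i))).1 hY i (Finset.mem_univ i)
      exact (pow_eq_zero_iff two_ne_zero).1 this
    cases d with
    | zero =>
        refine ⟨(s.1, q.2), ⟨rfl, rfl⟩, ?_⟩
        rw [pDist]
        simp
    | succ n =>
        set a := Real.sqrt (∑ i, s.2 i ^ 2) with hadef
        refine ⟨(s.1, fun i => if i = 0 then a else 0), ⟨rfl, ?_⟩, ?_⟩
        · have : ∀ i : Fin (n + 1),
              ((if i = 0 then a else 0) : ℝ) ^ 2 = if i = 0 then a ^ 2 else 0 := by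
            intro i; split <;> simp
          rw [Finset.sum_congr rfl fun i _ => this i]
          simp [hadef, Real.sq_sqrt hA0]
        · rw [pDist]
          congr 1
          have h1 : ∑ i : Fin (n + 1),
              (q.2 i - (if i = 0 then a else 0)) ^ 2
              = ∑ i : Fin (n + 1), (if i = 0 then a ^ 2 else 0) := by
            refine Finset.sum_congr rfl fun i _ => ?_
            rw [hq0 i]; split <;> simp
          rw [h1, hY, Real.sqrt_zero]
          simp [Real.sq_sqrt hA0]
  · set y := Real.sqrt (∑ i, q.2 i ^ 2) with hydef
    set a := Real.sqrt (∑ i, s.2 i ^ 2) with hadef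
    have hy2 : y ^ 2 = ∑ i, q.2 i ^ 2 := Real.sq_sqrt hY0
    have hypos : 0 < y := Real.sqrt_pos.2 (lt_of_le_of_ne hY0 (Ne.symm hY))
    refine ⟨(s.1, fun i => (a / y) * q.2 i), ⟨rfl, ?_⟩, ?_⟩
    · have h1 : ∑ i, ((a / y) * q.2 i) ^ 2 = (a / y) ^ 2 * ∑ i, q.2 i ^ 2 := by
        rw [Finset.mul_sum]
        exact Finset.sum_congr rfl fun i _ => by ring
      rw [h1, ← hy2]
      field_simp
      exact (Real.sq_sqrt hA0)
    · rw [pDist]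
      congr 1
      have h1 : ∑ i, (q.2 i - (a / y) * q.2 i) ^ 2
          = (1 - a / y) ^ 2 * ∑ i, q.2 i ^ 2 := by
        rw [Finset.mul_sum]
        exact Finset.sum_congr rfl fun i _ => by ring
      rw [h1, ← hy2]
      field_simp

end SphereAux

/-- for every `ε > 0` and every paravector `s` there exists
`ε_s > 0` with
`[s] + U_{ε_s}(0) ⊆ {q : |q² - 2s₀q + |s|²| < ε²} ⊆ [s] + U_ε(0)`. -/
theorem sphere_neighborhood_inclusions {d : ℕ} (ε : ℝ) (hε : 0 < ε)
    (s : ℝ × (Fin d → ℝ)) :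
    ∃ εs : ℝ, 0 < εs ∧
      (∀ q : ℝ × (Fin d → ℝ), (∃ t ∈ pSphere s, pDist q t < εs) →
        qPolyNorm s q < ε ^ 2) ∧
      (∀ q : ℝ × (Fin d → ℝ), qPolyNorm s q < ε ^ 2 →
        ∃ t ∈ pSphere s, pDist q t < ε) := by
  set a := Real.sqrt (∑ i, s.2 i ^ 2) with hadef
  have ha0 : 0 ≤ a := Real.sqrt_nonneg _
  have hc : 0 < ε + 2 * a := by linarith
  set εs := ε ^ 2 / (ε + 2 * a) with hεsdef
  have hεs0 : 0 < εs := div_pos (pow_pos hε 2) hc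
  have hεsle : εs * (εs + 2 * a) ≤ ε ^ 2 := by
    rw [hεsdef, div_add' _ _ _ hc.ne', div_mul_div_comm, div_le_iff₀ (by positivity)]
    nlinarith [mul_nonneg (mul_nonneg (mul_nonneg ha0 hε.le) hε.le) hε.le]
  refine ⟨εs, hεs0, ?_, ?_⟩
  · rintro q ⟨t, ht, hlt⟩
    set x := q.1 - s.1 with hxdef
    set y := Real.sqrt (∑ i, q.2 i ^ 2) with hydef
    have hy0 : 0 ≤ y := Real.sqrt_nonneg _
    set Dm := Real.sqrt (x ^ 2 + (y - a) ^ 2) with hDmdef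
    set Dp := Real.sqrt (x ^ 2 + (y + a) ^ 2) with hDpdef
    have hDm0 : 0 ≤ Dm := Real.sqrt_nonneg _
    have hDp0 : 0 ≤ Dp := Real.sqrt_nonneg _
    have hDm2 : Dm ^ 2 = x ^ 2 + (y - a) ^ 2 := Real.sq_sqrt (by positivity)
    have hDmlt : Dm < εs := lt_of_le_of_lt (SphereAux.pDist_lower s q t ht) hlt
    have hDmge : y - a ≤ Dm := by nlinarith [sq_nonneg (Dm - (y - a)), sq_nonneg (Dm + (y - a))]
    have hDple : Dp ≤ Dm + 2 * a := by
      rw [hDpdef]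
      have h1 : x ^ 2 + (y + a) ^ 2 ≤ (Dm + 2 * a) ^ 2 := by nlinarith
      calc Real.sqrt (x ^ 2 + (y + a) ^ 2) ≤ Real.sqrt ((Dm + 2 * a) ^ 2) :=
            Real.sqrt_le_sqrt h1
        _ = Dm + 2 * a := Real.sqrt_sq (by linarith)
    rw [SphereAux.qPolyNorm_eq]
    calc Dm * Dp < εs * (εs + 2 * a) := by nlinarith
      _ ≤ ε ^ 2 := hεsle
  · intro q hq
    obtain ⟨t, ht, hdist⟩ := SphereAux.exists_near s q
    refine ⟨t, ht, ?_⟩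
    rw [hdist]
    rw [SphereAux.qPolyNorm_eq] at hq
    set x := q.1 - s.1 with hxdef
    set y := Real.sqrt (∑ i, q.2 i ^ 2) with hydef
    have hy0 : 0 ≤ y := Real.sqrt_nonneg _
    set Dm := Real.sqrt (x ^ 2 + (y - a) ^ 2) with hDmdef
    set Dp := Real.sqrt (x ^ 2 + (y + a) ^ 2) with hDpdef
    have hDm0 : 0 ≤ Dm := Real.sqrt_nonneg _
    have hDmle : Dm ≤ Dp := Real.sqrt_le_sqrt (by nlinarith [mul_nonneg hy0 ha0])
    have hsq : Dm ^ 2 < ε ^ 2 := by nlinarith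
    nlinarith
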